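/- Let p ≥ 3 be a natural number and let f : ℝ² → ℝ be the polynomial function f(x,y) = x^(2p) + (y² − x)². There exists ε₀ > 0 such that for every ε with 0 < ε < ε₀ and every real number x_B with x_B^(2p) + x_B² ≤ ε, the point M = ((ε^(1/(2p)) + x_B)/2, ε^(1/(4p))/2) satisfies f(M) > ε. -/
import Mathlib


/-- For `p ≥ 3` and `f(x,y) = x^(2p) + (y² − x)²`, there exists `ε₀ > 0` such that
for every `0 < ε < ε₀` and every real `x_B` with `x_B^(2p) + x_B² ≤ ε`, the midpoint
`M = ((ε^(1/(2p)) + x_B)/2, ε^(1/(4p))/2)` satisfies `f(M) > ε`. -/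
theorem midpoint_outside_sublevel (p : ℕ) (hp : 3 ≤ p) (f : ℝ × ℝ → ℝ)
    (hf : ∀ q : ℝ × ℝ, f q = q.1 ^ (2 * p) + (q.2 ^ 2 - q.1) ^ 2) :
    ∃ ε₀ > 0, ∀ ε : ℝ, 0 < ε → ε < ε₀ →
      ∀ xB : ℝ, xB ^ (2 * p) + xB ^ 2 ≤ ε →
        ε < f ((ε ^ (1 / (2 * (p : ℝ))) + xB) / 2, ε ^ (1 / (4 * (p : ℝ))) / 2) := by
  refine ⟨1/1000, by norm_num, ?_⟩
  intro ε hε hε' xB hxB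
  have hp0 : (0:ℝ) < p := by positivity
  have hε1 : ε ≤ 1 := by linarith
  set a := ε ^ (1 / (2 * (p : ℝ))) with ha
  have ha0 : 0 < a := Real.rpow_pos_of_pos hε _
  -- y² = a / 4
  have hy2 : (ε ^ (1 / (4 * (p : ℝ))) / 2) ^ 2 = a / 4 := by
    rw [div_pow, ← Real.rpow_natCast (ε ^ (1 / (4 * (p : ℝ)))) 2,
      ← Real.rpow_mul hε.le]
    norm_num
    rw [ha]
    congr 1
    field_simp
    ring
  -- xB² ≤ ε
  have hxB2 : xB ^ 2 ≤ ε := by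
    have : (0:ℝ) ≤ xB ^ (2 * p) := by
      rw [pow_mul]; exact pow_nonneg (sq_nonneg xB) p
    linarith
  -- |xB| ≤ ε^(1/2)
  have habs : |xB| ≤ ε ^ ((1:ℝ)/2) := by
    rw [← Real.sqrt_eq_rpow]
    have := Real.sqrt_le_sqrt hxB2
    rwa [Real.sqrt_sq_eq_abs] at this
  -- ε^(1/2) ≤ a/4
  have hcube : ((1/1000 : ℝ)) ^ ((1:ℝ)/3) = 1/10 := by
    rw [show (1/1000:ℝ) = (1/10)^(3:ℕ) by norm_num, ← Real.rpow_natCast,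
      ← Real.rpow_mul (by norm_num)]
    norm_num
  have hsqrt : ε ^ ((1:ℝ)/2) ≤ a / 4 := by
    have hsplit : ε ^ ((1:ℝ)/2) = a * ε ^ ((1:ℝ)/2 - 1 / (2 * (p:ℝ))) := by
      rw [ha, ← Real.rpow_add hε]
      ring_nf
    have hexp : (1:ℝ)/3 ≤ (1:ℝ)/2 - 1 / (2 * (p:ℝ)) := by
      have hp3 : (3:ℝ) ≤ (p:ℝ) := by exact_mod_cast hp
      have : 1 / (2 * (p:ℝ)) ≤ 1/6 := by
        rw [div_le_div_iff₀ (by linarith) (by norm_num)]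
        linarith
      linarith
    have h1 : ε ^ ((1:ℝ)/2 - 1 / (2 * (p:ℝ))) ≤ ε ^ ((1:ℝ)/3) :=
      Real.rpow_le_rpow_of_exponent_ge hε hε1 hexp
    have h2 : ε ^ ((1:ℝ)/3) ≤ (1/1000:ℝ) ^ ((1:ℝ)/3) :=
      Real.rpow_le_rpow hε.le (by linarith) (by norm_num)
    rw [hcube] at h2
    calc ε ^ ((1:ℝ)/2) = a * ε ^ ((1:ℝ)/2 - 1 / (2 * (p:ℝ))) := hsplit
      _ ≤ a * (1/10) := by nlinarith
      _ ≤ a / 4 := by linarith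
  -- a² = ε^(1/p)
  have ha2 : a ^ 2 = ε ^ (1 / (p:ℝ)) := by
    rw [ha, ← Real.rpow_natCast (ε ^ (1 / (2 * (p : ℝ)))) 2, ← Real.rpow_mul hε.le]
    congr 1
    push_cast
    field_simp
  -- ε < ε^(1/p)/64
  have hkey : ε < ε ^ (1 / (p:ℝ)) / 64 := by
    have hsplit : ε = ε ^ (1 / (p:ℝ)) * ε ^ (1 - 1 / (p:ℝ)) := by
      rw [← Real.rpow_add hε]
      norm_num
    have hexp : (2:ℝ)/3 ≤ 1 - 1 / (p:ℝ) := by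
      have hp3 : (3:ℝ) ≤ (p:ℝ) := by exact_mod_cast hp
      have : 1 / (p:ℝ) ≤ 1/3 := by
        rw [div_le_div_iff₀ (by linarith) (by norm_num)]
        linarith
      linarith
    have h1 : ε ^ (1 - 1 / (p:ℝ)) ≤ ε ^ ((2:ℝ)/3) :=
      Real.rpow_le_rpow_of_exponent_ge hε hε1 hexp
    have h2 : ε ^ ((2:ℝ)/3) ≤ (1/1000:ℝ) ^ ((2:ℝ)/3) :=
      Real.rpow_le_rpow hε.le (by linarith) (by norm_num)
    have hc : ((1/1000 : ℝ)) ^ ((2:ℝ)/3) = 1/100 := by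
      rw [show (1/1000:ℝ) = (1/10)^(3:ℕ) by norm_num, ← Real.rpow_natCast,
        ← Real.rpow_mul (by norm_num)]
      norm_num
    rw [hc] at h2
    have hpow : 0 < ε ^ (1 / (p:ℝ)) := Real.rpow_pos_of_pos hε _
    nlinarith
  -- assemble
  rw [hf]
  simp only [hy2]
  have hxnn : (0:ℝ) ≤ ((a + xB) / 2) ^ (2 * p) := by
    rw [pow_mul]; exact pow_nonneg (sq_nonneg _) p
  have hlow : a / 8 ≤ a / 4 + xB / 2 := by
    have : -xB ≤ |xB| := neg_le_abs xB
    nlinarith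
  have hsq : (a/8)^2 ≤ (a / 4 - (a + xB)/2) ^ 2 := by
    have h8 : 0 < a / 8 := by linarith
    have heq : (a / 4 - (a + xB)/2) ^ 2 = (a/4 + xB/2)^2 := by ring
    rw [heq]
    exact pow_le_pow_left₀ h8.le hlow 2
  have : ε < (a/8)^2 := by
    have : (a/8)^2 = a^2/64 := by ring
    rw [this, ha2]
    exact hkey
  linarith [hxnn, hsq, this]
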